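/- Assume π/β ∉ ℤ and w(θ₂⁺) ≠ w(0), where w(θ₂⁺) := cos((π/β)·π) is the limit of w at θ₂⁺. Define φ₁(θ₂) = −μ₁ w′(0) θ₂/(w(θ₂) − w(0)), φ₁(θ₂⁺) = −μ₁ w′(0) θ₂⁺/(w(θ₂⁺) − w(0)), and C₁ = −φ₁(θ₂⁺)·2(π/β)·sin((π/β)·π)/((w(θ₂⁺) − w(0))·√(θ₂⁺ − θ₂⁻)). Then, as θ₂ → θ₂⁺ within ℂ∖[θ₂⁺, ∞), φ₁(θ₂) − φ₁(θ₂⁺) − C₁·√(θ₂⁺ − θ₂) = O(θ₂ − θ₂⁺), where √ is the principal complex square root. -/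

import Mathlib

open Asymptotics Filter Complex

/-- The cut plane `ℂ ∖ (−∞, −1]`. -/
def cutC : Set ℂ := {z : ℂ | z.im = 0 ∧ z.re ≤ -1}ᶜ

/-- `T` is an analytic function on the cut plane `ℂ ∖ (−∞, −1]` agreeing with
`x ↦ cos (a · arccos x)` on `(−1, 1]`. -/
def IsChebyshev (a : ℝ) (T : ℂ → ℂ) : Prop :=
  (∀ z ∈ cutC, DifferentiableAt ℂ T z) ∧
  ∀ x : ℝ, x ∈ Set.Ioc (-1 : ℝ) 1 → T (x : ℂ) = ((Real.cos (a * Real.arccos x) : ℝ) : ℂ)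

/-- The affine map `χ(θ₂) = −(2θ₂ − (θ₂⁺+θ₂⁻))/(θ₂⁺−θ₂⁻)`. -/
noncomputable def chiMap (θ2p θ2m : ℝ) (θ : ℂ) : ℂ :=
  -(2 * θ - ((θ2p : ℂ) + (θ2m : ℂ))) / ((θ2p : ℂ) - (θ2m : ℂ))

lemma taylor2 {g : ℂ → ℂ} (hg : AnalyticAt ℂ g 0) :
    (fun x : ℂ => g x - g 0 - deriv g 0 * x) =O[nhds 0] fun x => x ^ 2 := by
  obtain ⟨p, hp⟩ := hg
  have h := hp.isBigO_sub_partialSum_pow 2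
  simp only [zero_add] at h
  have h2 : ∀ x : ℂ, p.partialSum 2 x = g 0 + deriv g 0 * x := by
    intro x
    simp [FormalMultilinearSeries.partialSum, Finset.sum_range_succ,
      FormalMultilinearSeries.apply_eq_pow_smul_coeff]
    rw [← hp.coeff_zero fun _ => x, hp.deriv]
    ring_nf
    simp [smul_eq_mul]
    ring
  have h3 : (fun x : ℂ => (x:ℂ)^2) =O[nhds 0] fun x : ℂ => ‖x‖ ^ 2 := by
    apply isBigO_of_le
    intro x; simp [norm_pow]
  calc (fun x : ℂ => g x - g 0 - deriv g 0 * x) 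
      =O[nhds 0] (fun x : ℂ => ‖x‖ ^ 2) := by
        apply h.congr' _ (by rfl)
        filter_upwards with x
        rw [h2]; ring
    _ =O[nhds 0] fun x => x ^ 2 := by
        apply isBigO_of_le
        intro x; simp [norm_pow]

noncomputable def csqrt (z : ℂ) : ℂ := z ^ ((1:ℂ)/2)

lemma csqrt_ofReal {x : ℝ} (hx : 0 ≤ x) : csqrt (x : ℂ) = (Real.sqrt x : ℂ) := by
  rw [csqrt, show (1:ℂ)/2 = ((1/2 : ℝ) : ℂ) by norm_num,
    ← Complex.ofReal_cpow hx, Real.sqrt_eq_rpow]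

lemma norm_csqrt (z : ℂ) : ‖csqrt z‖ = ‖z‖ ^ ((1:ℝ)/2) := by
  rw [csqrt, show (1:ℂ)/2 = ((1/2 : ℝ) : ℂ) by norm_num]
  simpa using Complex.norm_cpow_real z (1/2)

lemma sq_csqrt {z : ℂ} (hz : z ≠ 0) : csqrt z ^ 2 = z := by
  rw [csqrt, sq, ← Complex.cpow_add _ _ hz]
  norm_num

lemma csqrt_real_mul {c : ℝ} (hc : 0 < c) (z : ℂ) :
    csqrt ((c : ℂ) * z) = (Real.sqrt c : ℂ) * csqrt z := by
  rcases eq_or_ne z 0 with rfl | hz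
  · simp [csqrt, Complex.zero_cpow (by norm_num : (1:ℂ)/2 ≠ 0)]
  have hcz : (c:ℂ) * z ≠ 0 := mul_ne_zero (by exact_mod_cast hc.ne') hz
  rw [csqrt, csqrt, Complex.cpow_def_of_ne_zero hcz, Complex.cpow_def_of_ne_zero hz,
    Complex.log_ofReal_mul hc hz, add_mul, Complex.exp_add]
  congr 1
  rw [show ((Real.log c : ℂ)) * ((1:ℂ)/2) = ((Real.log c * (1/2) : ℝ) : ℂ) by push_cast; ring,
    ← Complex.ofReal_exp, ← Real.rpow_def_of_pos hc, ← Real.sqrt_eq_rpow]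

lemma analyticAt_csqrt {z : ℂ} (hz : z ∈ Complex.slitPlane) : AnalyticAt ℂ csqrt z :=
  analyticAt_id.cpow analyticAt_const hz

lemma tendsto_csqrt_zero : Filter.Tendsto csqrt (nhds 0) (nhds 0) := by
  rw [tendsto_zero_iff_norm_tendsto_zero]
  have h1 : Filter.Tendsto (fun z : ℂ => ‖z‖) (nhds 0) (nhds 0) := by
    simpa using continuous_norm.tendsto (0:ℂ)
  have h2 : Filter.Tendsto (fun t : ℝ => t ^ ((1:ℝ)/2)) (nhds 0) (nhds 0) := by
    have := (Real.continuousAt_rpow_const 0 ((1:ℝ)/2) (Or.inr (by norm_num))).tendsto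
    simpa [Real.zero_rpow (by norm_num : (1:ℝ)/2 ≠ 0)] using this
  exact (h2.comp h1).congr (fun z => (norm_csqrt z).symm)

noncomputable def qfun (z : ℂ) : ℂ := -z - I * (csqrt (1 - z) * csqrt (1 + z))
noncomputable def Afun (z : ℂ) : ℂ := (Real.pi : ℂ) - I * Complex.log (qfun z)

lemma two_mem_slitPlane : (2:ℂ) ∈ Complex.slitPlane := by
  rw [Complex.mem_slitPlane_iff]; norm_num

lemma one_mem_slitPlane' : (1:ℂ) ∈ Complex.slitPlane := by
  rw [Complex.mem_slitPlane_iff]; norm_num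

lemma cutC_add_one {z : ℂ} (hz : z ∈ cutC) : 1 + z ∈ Complex.slitPlane := by
  rw [Complex.mem_slitPlane_iff]
  have hz' : ¬(z.im = 0 ∧ z.re ≤ -1) := hz
  push_neg at hz'
  rcases eq_or_ne z.im 0 with h | h
  · left; have := hz' h; simp only [Complex.add_re, Complex.one_re]; linarith
  · right; simpa using h

lemma cutC_ne_neg_one {z : ℂ} (hz : z ∈ cutC) : 1 + z ≠ 0 :=
  Complex.slitPlane_ne_zero (cutC_add_one hz)

section Fexp

lemma tendsto_one_add : Tendsto (fun z : ℂ => 1 + z) (nhdsWithin (-1 : ℂ) cutC) (nhds 0) := by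
  have h : Tendsto (fun z : ℂ => 1 + z) (nhds (-1 : ℂ)) (nhds (1 + -1)) :=
    (continuous_const.add continuous_id).tendsto (-1 : ℂ)
  simpa using h.mono_left nhdsWithin_le_nhds

lemma tendsto_one_sub : Tendsto (fun z : ℂ => 1 - z) (nhdsWithin (-1 : ℂ) cutC) (nhds 2) := by
  have h : Tendsto (fun z : ℂ => 1 - z) (nhds (-1 : ℂ)) (nhds (1 - -1)) :=
    (continuous_const.sub continuous_id).tendsto (-1 : ℂ)
  have h2 : (1 : ℂ) - -1 = 2 := by norm_num
  rw [h2] at h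
  exact h.mono_left nhdsWithin_le_nhds

lemma F_expansion (a : ℝ) :
    (fun z : ℂ => Complex.cos ((a:ℂ) * Afun z) - Complex.cos ((a:ℂ) * (Real.pi:ℂ))
      - (a:ℂ) * Complex.sin ((a:ℂ) * (Real.pi:ℂ)) * (Real.sqrt 2 : ℂ) * csqrt (1 + z))
      =O[nhdsWithin (-1 : ℂ) cutC] (fun z => 1 + z) := by
  set m := nhdsWithin (-1 : ℂ) cutC with hm
  set v : ℂ → ℂ := fun z => csqrt (1 + z) with hv
  set r : ℂ → ℂ := fun z => csqrt (1 - z) with hr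
  have hmem : ∀ᶠ z in m, z ∈ cutC := self_mem_nhdsWithin
  have hne : ∀ᶠ z in m, 1 + z ≠ 0 := hmem.mono fun z hz => cutC_ne_neg_one hz
  have hsq : ∀ᶠ z in m, v z ^ 2 = 1 + z := hne.mono fun z hz => sq_csqrt hz
  have h1z : Tendsto (fun z : ℂ => 1 + z) m (nhds 0) := tendsto_one_add
  have hv0 : Tendsto v m (nhds 0) := tendsto_csqrt_zero.comp h1z
  have hrt : Tendsto r m (nhds (csqrt 2)) :=
    ((analyticAt_csqrt two_mem_slitPlane).continuousAt.tendsto).comp tendsto_one_sub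
  have hq1' : Tendsto (fun z => qfun z - 1) m (nhds 0) := by
    have h : Tendsto (fun z : ℂ => -z - I * (r z * v z) - 1) m
        (nhds (-(-1 : ℂ) - I * (csqrt 2 * 0) - 1)) :=
      (((tendsto_id.mono_left nhdsWithin_le_nhds).neg.sub
        (tendsto_const_nhds.mul (hrt.mul hv0)))).sub tendsto_const_nhds
    have h2 : (-(-1 : ℂ) - I * (csqrt 2 * 0) - 1) = 0 := by ring
    rw [h2] at h
    exact h
  -- q - 1 = v * (-(v) - I * r)  eventually
  have hqv : (fun z => qfun z - 1) =ᶠ[m] (fun z => v z * (-(v z) - I * r z)) := by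
    filter_upwards [hsq] with z hz
    show qfun z - 1 = v z * (-(v z) - I * r z)
    have h1 : (1:ℂ) + z = v z ^ 2 := hz.symm
    show -z - I * (r z * v z) - 1 = _
    rw [show -z - I * (r z * v z) - 1 = -(1 + z) - I * (r z * v z) by ring, h1]
    ring
  have hfac : Tendsto (fun z => -(v z) - I * r z) m (nhds (-(0:ℂ) - I * csqrt 2)) :=
    (hv0.neg).sub (tendsto_const_nhds.mul hrt)
  have hq1O : (fun z => qfun z - 1) =O[m] v := by
    have h1 : (fun z => v z * (-(v z) - I * r z)) =O[m] (fun z => v z * 1) :=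
      (isBigO_refl v m).mul (hfac.isBigO_one ℂ)
    exact h1.congr' hqv.symm
      (show (fun z => v z * 1) =ᶠ[m] v by filter_upwards with z; ring_nf)
  -- log expansion
  have hlogq : (fun z => Complex.log (qfun z) - (qfun z - 1)) =O[m] (fun z => (qfun z - 1) ^ 2) := by
    have hg : AnalyticAt ℂ (fun x : ℂ => Complex.log (1 + x)) 0 :=
      AnalyticAt.clog (analyticAt_const.add analyticAt_id) (by simpa using one_mem_slitPlane')
    have hd : deriv (fun x : ℂ => Complex.log (1 + x)) 0 = 1 := by
      have hin : HasDerivAt (fun x : ℂ => 1 + x) 1 0 := by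
        simpa using (hasDerivAt_id (0:ℂ)).const_add (1:ℂ)
      have h1 : HasDerivAt (fun x : ℂ => Complex.log (1 + x)) (1 / (1 + 0)) 0 :=
        hin.clog (by simpa using one_mem_slitPlane')
      have := h1.deriv
      simpa using this
    have ht := taylor2 hg
    rw [hd] at ht
    simp only [add_zero, Complex.log_one, sub_zero, one_mul] at ht
    have hcomp := ht.comp_tendsto hq1'
    simp only [Function.comp_def] at hcomp
    apply hcomp.congr' _ EventuallyEq.rfl
    filter_upwards with z
    rw [show (1:ℂ) + (qfun z - 1) = qfun z by ring]
  have hq2v2 : (fun z => (qfun z - 1) ^ 2) =O[m] (fun z => v z ^ 2) := by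
    have h := hq1O.mul hq1O
    have e1 : (fun z => (qfun z - 1) * (qfun z - 1)) = (fun z => (qfun z - 1) ^ 2) := by
      funext z; ring
    have e2 : (fun z => v z * v z) = (fun z => v z ^ 2) := by funext z; ring
    rwa [e1, e2] at h
  have hv2v : (fun z => v z ^ 2) =O[m] v := by
    have h1 : (fun z => v z * v z) =O[m] (fun z => v z * 1) :=
      (isBigO_refl v m).mul (hv0.isBigO_one ℂ)
    exact h1.congr (fun z => by ring) (fun z => by ring)
  -- delta
  set δ : ℂ → ℂ := fun z => I * Complex.log (qfun z) with hδdef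
  have hlogO : (fun z => Complex.log (qfun z)) =O[m] v := by
    have h1 : (fun z => Complex.log (qfun z) - (qfun z - 1)) =O[m] v :=
      (hlogq.trans hq2v2).trans hv2v
    have h2 := h1.add hq1O
    exact h2.congr (fun z => by ring) (fun z => by ring)
  have hδO : δ =O[m] v := hlogO.const_mul_left I
  have hδ0 : Tendsto δ m (nhds 0) := hδO.trans_tendsto hv0
  have hδ2 : (fun z => δ z ^ 2) =O[m] (fun z => v z ^ 2) := by
    have := hδO.mul hδO
    exact this.congr (fun z => by ring) (fun z => by ring)
  -- r - sqrt 2 = O(1+z)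
  have hsqrt2 : csqrt 2 = ((Real.sqrt 2 : ℝ) : ℂ) := by
    have := csqrt_ofReal (show (0:ℝ) ≤ 2 by norm_num)
    simpa using this
  have hdiff : (fun z => r z - ((Real.sqrt 2 : ℝ) : ℂ)) =O[m] (fun z => 1 + z) := by
    have hcs : DifferentiableAt ℂ csqrt ((fun z : ℂ => 1 - z) (-1)) := by
      have h2 : ((fun z : ℂ => 1 - z) (-1)) = 2 := by norm_num
      rw [h2]
      exact (analyticAt_csqrt two_mem_slitPlane).differentiableAt
    have hin : DifferentiableAt ℂ (fun z : ℂ => 1 - z) (-1) :=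
      (differentiable_const (1:ℂ)).differentiableAt.sub differentiable_id.differentiableAt
    have hd : DifferentiableAt ℂ (fun z : ℂ => csqrt (1 - z)) (-1) := hcs.comp (-1) hin
    have h := hd.isBigO_sub
    have he : csqrt (1 - (-1 : ℂ)) = ((Real.sqrt 2 : ℝ) : ℂ) := by
      rw [show (1:ℂ) - (-1) = 2 by norm_num, hsqrt2]
    have h2 := h.mono (nhdsWithin_le_nhds : m ≤ nhds (-1 : ℂ))
    exact h2.congr (fun z => by rw [he]) (fun z => by ring)
  have t3 : (fun z => (r z - ((Real.sqrt 2 : ℝ) : ℂ)) * v z) =O[m] (fun z => v z ^ 2) := by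
    have h1 := hdiff.mul (isBigO_refl v m)
    have h2 : (fun z => (1 + z) * v z) =O[m] (fun z => v z ^ 2) := by
      have h3 : (fun z => v z ^ 2 * v z) =O[m] (fun z => v z ^ 2 * 1) :=
        (isBigO_refl _ m).mul (hv0.isBigO_one ℂ)
      exact h3.congr'
        (show (fun z => v z ^ 2 * v z) =ᶠ[m] (fun z => (1 + z) * v z) by
          filter_upwards [hsq] with z hz; rw [hz])
        (show (fun z => v z ^ 2 * 1) =ᶠ[m] (fun z => v z ^ 2) by filter_upwards with z; ring)
    exact h1.trans h2
  have hkey : (fun z => δ z - ((Real.sqrt 2 : ℝ) : ℂ) * v z) =O[m] (fun z => v z ^ 2) := by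
    have e1 : (fun z => δ z - ((Real.sqrt 2 : ℝ) : ℂ) * v z) =ᶠ[m]
        (fun z => I * (Complex.log (qfun z) - (qfun z - 1)) + (-I) * v z ^ 2
          + (r z - ((Real.sqrt 2 : ℝ) : ℂ)) * v z) := by
      filter_upwards [hsq] with z hz
      show δ z - ((Real.sqrt 2 : ℝ) : ℂ) * v z = _
      have hq : qfun z - 1 = -(v z ^ 2) - I * (r z * v z) := by
        show -z - I * (r z * v z) - 1 = _
        rw [show -z - I * (r z * v z) - 1 = -(1 + z) - I * (r z * v z) by ring, hz.symm]
      have hI : I * I = -1 := Complex.I_mul_I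
      show I * Complex.log (qfun z) - _ = _
      rw [show I * Complex.log (qfun z)
          = I * (Complex.log (qfun z) - (qfun z - 1)) + I * (qfun z - 1) by ring, hq]
      rw [show I * (-(v z ^ 2) - I * (r z * v z))
          = -I * v z ^ 2 - (I * I) * (r z * v z) by ring, hI]
      ring
    have t1 : (fun z => I * (Complex.log (qfun z) - (qfun z - 1))) =O[m] (fun z => v z ^ 2) :=
      (hlogq.trans hq2v2).const_mul_left I
    have t2 : (fun z => (-I) * v z ^ 2) =O[m] (fun z => v z ^ 2) :=
      (isBigO_refl _ m).const_mul_left (-I)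
    exact ((t1.add t2).add t3).congr' e1.symm EventuallyEq.rfl
  -- cos/sin Taylor
  have hcos2 : (fun w : ℂ => Complex.cos w - 1) =O[nhds 0] (fun w => w ^ 2) := by
    have hg : AnalyticAt ℂ Complex.cos 0 := Complex.differentiable_cos.analyticAt 0 -- maybe wrong name
    have := taylor2 hg
    simpa [Complex.deriv_cos, Complex.cos_zero, Complex.sin_zero] using this
  have hsin2 : (fun w : ℂ => Complex.sin w - w) =O[nhds 0] (fun w => w ^ 2) := by
    have hg : AnalyticAt ℂ Complex.sin 0 := Complex.differentiable_sin.analyticAt 0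
    have := taylor2 hg
    simpa [Complex.deriv_sin, Complex.cos_zero, Complex.sin_zero] using this
  have haδ0 : Tendsto (fun z => (a:ℂ) * δ z) m (nhds 0) := by
    have := hδ0.const_mul ((a:ℂ))
    simpa using this
  have haδ2 : (fun z => ((a:ℂ) * δ z) ^ 2) =O[m] (fun z => v z ^ 2) := by
    have h := hδ2.const_mul_left ((a:ℂ) ^ 2)
    exact h.congr (fun z => by ring) (fun z => rfl)
  have c1 : (fun z => Complex.cos ((a:ℂ) * δ z) - 1) =O[m] (fun z => v z ^ 2) := by
    have h := hcos2.comp_tendsto haδ0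
    simp only [Function.comp_def] at h
    exact h.trans haδ2
  have s1 : (fun z => Complex.sin ((a:ℂ) * δ z) - (a:ℂ) * δ z) =O[m] (fun z => v z ^ 2) := by
    have h := hsin2.comp_tendsto haδ0
    simp only [Function.comp_def] at h
    exact h.trans haδ2
  have efin : (fun z : ℂ => Complex.cos ((a:ℂ) * Afun z) - Complex.cos ((a:ℂ) * (Real.pi:ℂ))
      - (a:ℂ) * Complex.sin ((a:ℂ) * (Real.pi:ℂ)) * (Real.sqrt 2 : ℂ) * csqrt (1 + z)) =ᶠ[m]
      (fun z => Complex.cos ((a:ℂ) * (Real.pi:ℂ)) * (Complex.cos ((a:ℂ) * δ z) - 1)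
        + Complex.sin ((a:ℂ) * (Real.pi:ℂ)) * (Complex.sin ((a:ℂ) * δ z) - (a:ℂ) * δ z)
        + ((a:ℂ) * Complex.sin ((a:ℂ) * (Real.pi:ℂ)))
            * (δ z - ((Real.sqrt 2 : ℝ) : ℂ) * v z)) := by
    filter_upwards with z
    rw [show (a:ℂ) * Afun z = (a:ℂ) * (Real.pi:ℂ) - (a:ℂ) * δ z by
      simp only [Afun, hδdef]; ring, Complex.cos_sub]
    ring
  have hsum := ((c1.const_mul_left (Complex.cos ((a:ℂ) * (Real.pi:ℂ)))).add
    (s1.const_mul_left (Complex.sin ((a:ℂ) * (Real.pi:ℂ))))).add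
    (hkey.const_mul_left ((a:ℂ) * Complex.sin ((a:ℂ) * (Real.pi:ℂ))))
  exact (hsum.congr' efin.symm hsq).mono le_rfl
end Fexp

def Uset : Set ℂ := cutC ∩ Metric.ball (-1 : ℂ) (1/9)

lemma isOpen_cutC : IsOpen cutC := by
  rw [cutC, isOpen_compl_iff]
  have h1 : IsClosed {z : ℂ | z.im = 0} := isClosed_eq Complex.continuous_im continuous_const
  have h2 : IsClosed {z : ℂ | z.re ≤ -1} := isClosed_le Complex.continuous_re continuous_const
  exact h1.inter h2

lemma isOpen_Uset : IsOpen Uset := isOpen_cutC.inter Metric.isOpen_ball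

lemma Uset_norm_add {z : ℂ} (hz : z ∈ Uset) : ‖1 + z‖ < 1/9 := by
  have h := hz.2
  rw [Metric.mem_ball, Complex.dist_eq] at h
  have : z - (-1) = 1 + z := by ring
  rw [this] at h
  exact h

lemma Uset_one_add_slit {z : ℂ} (hz : z ∈ Uset) : 1 + z ∈ Complex.slitPlane :=
  cutC_add_one hz.1

lemma Uset_one_sub_slit {z : ℂ} (hz : z ∈ Uset) : 1 - z ∈ Complex.slitPlane := by
  rw [Complex.mem_slitPlane_iff]
  left
  have h := Uset_norm_add hz
  have h2 : |(1 + z).re| ≤ ‖1 + z‖ := Complex.abs_re_le_norm _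
  have h3 : (1 + z).re = 1 + z.re := by simp
  have h4 : (1 - z).re = 1 - z.re := by simp
  rw [h3] at h2
  rw [h4]
  have := abs_le.mp h2
  linarith [this.1, this.2, h]

lemma Uset_q_sub_one {z : ℂ} (hz : z ∈ Uset) : ‖qfun z - 1‖ < 1 := by
  have h1 : ‖1 + z‖ < 1/9 := Uset_norm_add hz
  have h1' : (0:ℝ) ≤ ‖1 + z‖ := norm_nonneg _
  have h2 : ‖1 - z‖ ≤ 19/9 := by
    have : (1 : ℂ) - z = 2 - (1 + z) := by ring
    rw [this]
    calc ‖(2:ℂ) - (1 + z)‖ ≤ ‖(2:ℂ)‖ + ‖1 + z‖ := norm_sub_le _ _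
      _ ≤ 2 + 1/9 := by
          have : ‖(2:ℂ)‖ = 2 := by simp
          rw [this]; linarith
      _ = 19/9 := by norm_num
  have hq : qfun z - 1 = -(1 + z) - I * (csqrt (1 - z) * csqrt (1 + z)) := by
    show -z - I * (csqrt (1 - z) * csqrt (1 + z)) - 1 = _
    ring
  rw [hq]
  have hbound : ‖csqrt (1 - z) * csqrt (1 + z)‖ ≤ 1/2 := by
    rw [norm_mul, norm_csqrt, norm_csqrt, ← Real.mul_rpow (norm_nonneg _) (norm_nonneg _)]
    have hm : ‖1 - z‖ * ‖1 + z‖ ≤ 1/4 := by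
      calc ‖1 - z‖ * ‖1 + z‖ ≤ (19/9) * (1/9) := by
            apply mul_le_mul h2 h1.le h1' (by norm_num)
        _ ≤ 1/4 := by norm_num
    calc (‖1 - z‖ * ‖1 + z‖) ^ ((1:ℝ)/2) ≤ ((1:ℝ)/4) ^ ((1:ℝ)/2) := by
          apply Real.rpow_le_rpow (by positivity) hm (by norm_num)
      _ = 1/2 := by
          rw [← Real.sqrt_eq_rpow, show (1/4:ℝ) = (1/2)^2 by norm_num,
            Real.sqrt_sq (by norm_num : (0:ℝ) ≤ 1/2)]
  calc ‖-(1 + z) - I * (csqrt (1 - z) * csqrt (1 + z))‖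
      ≤ ‖-(1 + z)‖ + ‖I * (csqrt (1 - z) * csqrt (1 + z))‖ := norm_sub_le _ _
    _ = ‖1 + z‖ + ‖csqrt (1 - z) * csqrt (1 + z)‖ := by
        rw [norm_neg, norm_mul, Complex.norm_I, one_mul]
    _ < 1/9 + 1/2 := by
        apply add_lt_add_of_lt_of_le h1 hbound
    _ < 1 := by norm_num

lemma Uset_q_slit {z : ℂ} (hz : z ∈ Uset) : qfun z ∈ Complex.slitPlane := by
  rw [Complex.mem_slitPlane_iff]
  left
  have h := Uset_q_sub_one hz
  have h2 : |(qfun z - 1).re| ≤ ‖qfun z - 1‖ := Complex.abs_re_le_norm _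
  have h3 : (qfun z - 1).re = (qfun z).re - 1 := by simp
  rw [h3] at h2
  have := abs_le.mp h2
  linarith [this.1]

lemma analyticAt_F (a : ℝ) {z : ℂ} (hz : z ∈ Uset) :
    AnalyticAt ℂ (fun z => Complex.cos ((a:ℂ) * Afun z)) z := by
  have h1 : AnalyticAt ℂ (fun z : ℂ => csqrt (1 - z)) z :=
    (analyticAt_csqrt (Uset_one_sub_slit hz)).comp (analyticAt_const.sub analyticAt_id)
  have h2 : AnalyticAt ℂ (fun z : ℂ => csqrt (1 + z)) z :=
    (analyticAt_csqrt (Uset_one_add_slit hz)).comp (analyticAt_const.add analyticAt_id)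
  have hq : AnalyticAt ℂ qfun z := by
    have : AnalyticAt ℂ (fun z : ℂ => -z - I * (csqrt (1 - z) * csqrt (1 + z))) z :=
      (analyticAt_id.neg).sub (analyticAt_const.mul (h1.mul h2))
    exact this
  have hlog : AnalyticAt ℂ (fun z => Complex.log (qfun z)) z := hq.clog (Uset_q_slit hz)
  have hA : AnalyticAt ℂ Afun z := by
    have : AnalyticAt ℂ (fun z => (Real.pi : ℂ) - I * Complex.log (qfun z)) z :=
      analyticAt_const.sub (analyticAt_const.mul hlog)
    exact this
  exact (Complex.differentiable_cos.analyticAt _).comp (analyticAt_const.mul hA)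

lemma cpt : ((-17/18 : ℝ) : ℂ) ∈ Uset := by
  constructor
  · show ¬(((-17/18 : ℝ) : ℂ).im = 0 ∧ ((-17/18 : ℝ) : ℂ).re ≤ -1)
    rintro ⟨-, h⟩
    rw [Complex.ofReal_re] at h
    norm_num at h
  · rw [Metric.mem_ball, Complex.dist_eq]
    have : ((-17/18 : ℝ) : ℂ) - (-1) = ((1/18 : ℝ) : ℂ) := by push_cast; ring
    rw [this]
    rw [Complex.norm_real, Real.norm_eq_abs, abs_of_pos (by norm_num : (0:ℝ) < 1/18)]
    norm_num

lemma preconnected_Uset : IsPreconnected Uset := by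
  apply isPreconnected_of_forall (((-17/18 : ℝ) : ℂ))
  intro y hy
  refine ⟨segment ℝ (((-17/18 : ℝ) : ℂ)) y, ?_, left_mem_segment _ _ _, right_mem_segment _ _ _,
    (convex_segment _ _).isPreconnected⟩
  intro p hp
  constructor
  · rcases hp with ⟨s, t, hs, ht, hst, rfl⟩
    show ¬((s • ((-17/18 : ℝ) : ℂ) + t • y).im = 0 ∧ _ ≤ -1)
    rintro ⟨him, hre⟩
    have him' : (s • ((-17/18 : ℝ) : ℂ) + t • y).im = t * y.im := by
      simp [Complex.add_im, Complex.smul_im]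
    rw [him'] at him
    have hre' : (s • ((-17/18 : ℝ) : ℂ) + t • y).re = s * (-17/18) + t * y.re := by
      simp [Complex.add_re, Complex.smul_re]
    rw [hre'] at hre
    rcases mul_eq_zero.mp him with rfl | hyim
    · -- t = 0, s = 1
      have hs1 : s = 1 := by linarith
      rw [hs1] at hre; norm_num at hre
    · -- y.im = 0 hence y.re > -1
      have hy1 : ¬(y.im = 0 ∧ y.re ≤ -1) := hy.1
      have hyre : -1 < y.re := by
        by_contra hc
        exact hy1 ⟨hyim, by linarith⟩
      rcases eq_or_lt_of_le ht with rfl | ht'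
      · have hs1 : s = 1 := by linarith
        rw [hs1] at hre; norm_num at hre
      · have k1 : t * y.re > -t := by nlinarith
        have k2 : s * (-17/18) ≥ -s := by nlinarith
        linarith
  · exact (convex_ball (-1 : ℂ) (1/9)).segment_subset cpt.2 hy.2 hp

lemma F_real (a : ℝ) {x : ℝ} (hx : x ∈ Set.Ioo (-1:ℝ) 1) :
    Complex.cos ((a:ℂ) * Afun (x:ℂ)) = ((Real.cos (a * Real.arccos x) : ℝ) : ℂ) := by
  have hx1 : (0:ℝ) ≤ 1 - x := by linarith [hx.2]
  have hx2 : (0:ℝ) ≤ 1 + x := by linarith [hx.1]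
  have e1 : (1 : ℂ) - (x:ℂ) = ((1 - x : ℝ) : ℂ) := by push_cast; ring
  have e2 : (1 : ℂ) + (x:ℂ) = ((1 + x : ℝ) : ℂ) := by push_cast; ring
  have hs : csqrt (1 - (x:ℂ)) * csqrt (1 + (x:ℂ)) = ((Real.sqrt (1 - x^2) : ℝ) : ℂ) := by
    rw [e1, e2, csqrt_ofReal hx1, csqrt_ofReal hx2, ← Complex.ofReal_mul,
      ← Real.sqrt_mul hx1]
    congr 2
    ring_nf
  have harc : Real.arccos x - Real.pi ∈ Set.Ioo (-Real.pi) 0 := by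
    constructor
    · have := Real.arccos_nonneg x
      have hπ := Real.pi_pos
      nlinarith [Real.arccos_pos.mpr hx.2]
    · have harcsin : -(Real.pi/2) < Real.arcsin x := by
        have hmem : -(Real.pi/2) ∈ Set.Ico (-(Real.pi/2)) (Real.pi/2) :=
          ⟨le_refl _, by linarith [Real.pi_pos]⟩
        exact (Real.lt_arcsin_iff_sin_lt' hmem).mpr
          (by rw [Real.sin_neg, Real.sin_pi_div_two]; linarith [hx.1])
      have : Real.arccos x < Real.pi := by
        rw [Real.arccos_eq_pi_div_two_sub_arcsin]
        linarith
      linarith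
  have hqx : qfun (x:ℂ) = Complex.exp (((Real.arccos x - Real.pi : ℝ) : ℂ) * I) := by
    rw [Complex.exp_mul_I]
    show -(x:ℂ) - I * (csqrt (1 - (x:ℂ)) * csqrt (1 + (x:ℂ))) = _
    rw [hs, ← Complex.ofReal_cos, ← Complex.ofReal_sin]
    rw [Real.cos_sub_pi, Real.sin_sub_pi]
    rw [Real.cos_arccos hx.1.le hx.2.le, Real.sin_arccos]
    push_cast
    ring
  have hlogq : Complex.log (qfun (x:ℂ)) = ((Real.arccos x - Real.pi : ℝ) : ℂ) * I := by
    rw [hqx, Complex.log_exp]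
    · rw [Complex.mul_I_im, Complex.ofReal_re]
      linarith [harc.1]
    · rw [Complex.mul_I_im, Complex.ofReal_re]
      linarith [harc.2, Real.pi_pos]
  have hA : Afun (x:ℂ) = ((Real.arccos x : ℝ) : ℂ) := by
    rw [Afun, hlogq]
    rw [show I * (((Real.arccos x - Real.pi : ℝ) : ℂ) * I)
        = ((Real.arccos x - Real.pi : ℝ) : ℂ) * (I * I) by ring, Complex.I_mul_I]
    push_cast
    ring
  rw [hA, ← Complex.ofReal_mul, ← Complex.ofReal_cos]

lemma T_eq_F (a : ℝ) (T : ℂ → ℂ)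
    (hdiff : ∀ z ∈ cutC, DifferentiableAt ℂ T z)
    (hval : ∀ x : ℝ, x ∈ Set.Ioc (-1 : ℝ) 1 → T (x : ℂ) = ((Real.cos (a * Real.arccos x) : ℝ) : ℂ)) :
    ∀ᶠ z in nhdsWithin (-1 : ℂ) cutC, T z = Complex.cos ((a:ℂ) * Afun z) := by
  have hTa : AnalyticOnNhd ℂ T Uset := by
    intro z hz
    rw [analyticAt_iff_eventually_differentiableAt]
    filter_upwards [isOpen_cutC.eventually_mem hz.1] with w hw
    exact hdiff w hw
  have hFa : AnalyticOnNhd ℂ (fun z => Complex.cos ((a:ℂ) * Afun z)) Uset :=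
    fun z hz => analyticAt_F a hz
  have hfreq : ∃ᶠ z in nhdsWithin (((-17/18 : ℝ) : ℂ)) {(((-17/18 : ℝ) : ℂ))}ᶜ,
      T z = Complex.cos ((a:ℂ) * Afun z) := by
    have hu : Filter.Tendsto (fun n : ℕ => ((-17/18 + 1/(n+1) : ℝ) : ℂ)) Filter.atTop
        (nhdsWithin (((-17/18 : ℝ) : ℂ)) {(((-17/18 : ℝ) : ℂ))}ᶜ) := by
      rw [tendsto_nhdsWithin_iff]
      constructor
      · have hr : Filter.Tendsto (fun n : ℕ => (-17/18 + 1/(n+1) : ℝ)) Filter.atTop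
            (nhds (-17/18)) := by
          have := tendsto_one_div_add_atTop_nhds_zero_nat (𝕜 := ℝ)
          have h2 := this.const_add (-17/18 : ℝ)
          simpa using h2
        exact (Complex.continuous_ofReal.tendsto _).comp hr
      · filter_upwards with n
        simp only [Set.mem_compl_iff, Set.mem_singleton_iff]
        intro hcon
        have := Complex.ofReal_injective hcon
        have hpos : (0:ℝ) < 1/((n:ℝ)+1) := by positivity
        linarith
    apply hu.frequently
    apply Filter.Frequently.of_forall
    intro n
    have hmem : (-17/18 + 1/((n:ℝ)+1) : ℝ) ∈ Set.Ioo (-1:ℝ) 1 := by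
      have h1 : (0:ℝ) < 1/((n:ℝ)+1) := by positivity
      have h2 : 1/((n:ℝ)+1) ≤ 1 := by
        rw [div_le_one (by positivity)]
        linarith [Nat.cast_nonneg (α := ℝ) n]
      constructor <;> [linarith; linarith]
    rw [hval _ (Set.mem_Ioc.mpr ⟨hmem.1, hmem.2.le⟩), F_real a hmem]
  have heq := hTa.eqOn_of_preconnected_of_frequently_eq hFa preconnected_Uset cpt hfreq
  have hball : Metric.ball (-1 : ℂ) (1/9) ∈ nhdsWithin (-1 : ℂ) cutC :=
    nhdsWithin_le_nhds (Metric.ball_mem_nhds _ (by norm_num))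
  filter_upwards [hball, self_mem_nhdsWithin] with z h1 h2
  exact heq ⟨h2, h1⟩

lemma cutC_iff_slit {z : ℂ} : z ∈ cutC ↔ 1 + z ∈ Complex.slitPlane := by
  constructor
  · exact cutC_add_one
  · intro h
    rw [Complex.mem_slitPlane_iff] at h
    show ¬(z.im = 0 ∧ z.re ≤ -1)
    rintro ⟨h1, h2⟩
    rcases h with h | h
    · rw [Complex.add_re, Complex.one_re] at h; linarith
    · rw [Complex.add_im, Complex.one_im, h1] at h; norm_num at h

lemma slit_real_mul_iff {c : ℝ} (hc : 0 < c) {z : ℂ} :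
    ((c : ℂ) * z) ∈ Complex.slitPlane ↔ z ∈ Complex.slitPlane := by
  rw [Complex.mem_slitPlane_iff, Complex.mem_slitPlane_iff]
  have hre : ((c : ℂ) * z).re = c * z.re := by
    simp [Complex.mul_re]
  have him : ((c : ℂ) * z).im = c * z.im := by
    simp [Complex.mul_im]
  rw [hre, him]
  constructor
  · rintro (h | h)
    · left
      by_contra hz
      push_neg at hz
      nlinarith
    · right; intro h0; rw [h0, mul_zero] at h; exact h rfl
  · rintro (h | h)
    · left; positivity
    · right; exact mul_ne_zero hc.ne' h


/-- Singular expansion of `φ₁` at `θ₂⁺` when `π/β ∉ ℤ` and `w(θ₂⁺) ≠ w(0)`: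
`φ₁(θ₂) = φ₁(θ₂⁺) + C₁ √(θ₂⁺ − θ₂) + O(θ₂ − θ₂⁺)`. -/
theorem stmt17 (σ11 σ12 σ22 μ1 μ2 : ℝ)
    (h11 : 0 < σ11) (h22 : 0 < σ22) (hdet : 0 < σ11 * σ22 - σ12 ^ 2)
    (hμ1 : μ1 < 0) (hμ2 : μ2 < 0)
    (θ2p θ2m β : ℝ)
    (hθ2p : θ2p = ((μ1 * σ12 - μ2 * σ11) +
      Real.sqrt ((μ1 * σ12 - μ2 * σ11) ^ 2 + μ1 ^ 2 * (σ11 * σ22 - σ12 ^ 2))) /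
      (σ11 * σ22 - σ12 ^ 2))
    (hθ2m : θ2m = ((μ1 * σ12 - μ2 * σ11) -
      Real.sqrt ((μ1 * σ12 - μ2 * σ11) ^ 2 + μ1 ^ 2 * (σ11 * σ22 - σ12 ^ 2))) /
      (σ11 * σ22 - σ12 ^ 2))
    (hβ : β = Real.arccos (-σ12 / Real.sqrt (σ11 * σ22)))
    (T : ℂ → ℂ) (hT : IsChebyshev (Real.pi / β) T)
    (w : ℂ → ℂ) (hw : w = fun θ => T (chiMap θ2p θ2m θ))
    (hnint : ¬∃ n : ℤ, Real.pi / β = (n : ℝ))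
    (wθ2p : ℂ) (hwθ2p : wθ2p = ((Real.cos (Real.pi / β * Real.pi) : ℝ) : ℂ))
    (hne : wθ2p ≠ w 0)
    (w'0 : ℂ) (hw'0 : w'0 = deriv w 0)
    (φ1 : ℂ → ℂ) (hφ1 : φ1 = fun θ => -(μ1 : ℂ) * w'0 * θ / (w θ - w 0))
    (φ1p : ℂ) (hφ1p : φ1p = -(μ1 : ℂ) * w'0 * (θ2p : ℂ) / (wθ2p - w 0))
    (C1 : ℂ) (hC1 : C1 = -φ1p * 2 * ((Real.pi / β : ℝ) : ℂ) *
      ((Real.sin (Real.pi / β * Real.pi) : ℝ) : ℂ) /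
      ((wθ2p - w 0) * ((Real.sqrt (θ2p - θ2m) : ℝ) : ℂ))) :
    (fun θ : ℂ => φ1 θ - φ1p - C1 * (((θ2p : ℂ) - θ) ^ ((1 : ℂ) / 2)))
      =O[nhdsWithin (θ2p : ℂ) ({z : ℂ | z.im = 0 ∧ θ2p ≤ z.re}ᶜ : Set ℂ)]
      (fun θ : ℂ => θ - (θ2p : ℂ)) := by
  obtain ⟨hTdiff, hTval⟩ := hT

  have hμ1' : μ1 ≠ 0 := ne_of_lt hμ1
  have hdisc : 0 < (μ1 * σ12 - μ2 * σ11) ^ 2 + μ1 ^ 2 * (σ11 * σ22 - σ12 ^ 2) := by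
    have h1 : 0 < μ1 ^ 2 := by positivity
    nlinarith [sq_nonneg (μ1 * σ12 - μ2 * σ11)]
  have hΔ : 0 < θ2p - θ2m := by
    have hs : 0 < Real.sqrt ((μ1 * σ12 - μ2 * σ11) ^ 2 + μ1 ^ 2 * (σ11 * σ22 - σ12 ^ 2)) :=
      Real.sqrt_pos.mpr hdisc
    rw [hθ2p, hθ2m, div_sub_div_same,
      show (μ1 * σ12 - μ2 * σ11)
          + Real.sqrt ((μ1 * σ12 - μ2 * σ11) ^ 2 + μ1 ^ 2 * (σ11 * σ22 - σ12 ^ 2))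
          - ((μ1 * σ12 - μ2 * σ11)
          - Real.sqrt ((μ1 * σ12 - μ2 * σ11) ^ 2 + μ1 ^ 2 * (σ11 * σ22 - σ12 ^ 2)))
        = 2 * Real.sqrt ((μ1 * σ12 - μ2 * σ11) ^ 2 + μ1 ^ 2 * (σ11 * σ22 - σ12 ^ 2)) by ring]
    positivity
  set Δ : ℝ := θ2p - θ2m with hΔdef
  set a : ℝ := Real.pi / β with hadef
  set D : Set ℂ := ({z : ℂ | z.im = 0 ∧ θ2p ≤ z.re}ᶜ : Set ℂ) with hD
  set l := nhdsWithin (θ2p : ℂ) D with hl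
  have hDslit : ∀ θ : ℂ, θ ∈ D ↔ ((θ2p:ℂ) - θ) ∈ Complex.slitPlane := by
    intro θ
    rw [Complex.mem_slitPlane_iff]
    simp only [hD, Set.mem_compl_iff, Set.mem_setOf_eq]
    have hre : ((θ2p:ℂ) - θ).re = θ2p - θ.re := by simp
    have him : ((θ2p:ℂ) - θ).im = -θ.im := by simp
    rw [hre, him]
    constructor
    · intro h
      push_neg at h
      rcases eq_or_ne θ.im 0 with h0 | h0
      · left; have := h h0; linarith
      · right; simpa using h0
    · rintro (h | h)
      · rintro ⟨-, h2⟩; linarith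
      · rintro ⟨h1, -⟩; rw [h1] at h; simp at h
  have hΔC : ((θ2p:ℂ) - (θ2m:ℂ)) ≠ 0 := by
    rw [show ((θ2p:ℂ) - (θ2m:ℂ)) = ((Δ : ℝ) : ℂ) by push_cast [hΔdef]; ring]
    exact_mod_cast ne_of_gt hΔ
  have hchi1 : ∀ θ : ℂ, 1 + chiMap θ2p θ2m θ = ((2/Δ : ℝ) : ℂ) * ((θ2p:ℂ) - θ) := by
    intro θ
    rw [chiMap]
    have hΔC' : ((Δ : ℝ) : ℂ) ≠ 0 := by exact_mod_cast ne_of_gt hΔ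
    rw [show ((2/Δ : ℝ) : ℂ) = 2 / ((Δ:ℝ):ℂ) by push_cast; ring]
    rw [show ((Δ : ℝ):ℂ) = ((θ2p:ℂ) - (θ2m:ℂ)) by push_cast [hΔdef]; ring]
    field_simp
    ring
  have hchiD : ∀ θ : ℂ, θ ∈ D ↔ chiMap θ2p θ2m θ ∈ cutC := by
    intro θ
    rw [cutC_iff_slit, hchi1, slit_real_mul_iff (by positivity : (0:ℝ) < 2/Δ), ← hDslit]
  have hchip : chiMap θ2p θ2m (θ2p:ℂ) = -1 := by
    rw [chiMap]
    rw [div_eq_iff hΔC]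
    ring
  have hmaps : Filter.Tendsto (chiMap θ2p θ2m) l (nhdsWithin (-1 : ℂ) cutC) := by
    rw [tendsto_nhdsWithin_iff]
    constructor
    · have hcont : Continuous (chiMap θ2p θ2m) := by
        unfold chiMap
        exact (((continuous_const.mul continuous_id).sub continuous_const).neg).div_const _
      have h := hcont.tendsto ((θ2p:ℂ))
      rw [hchip] at h
      exact h.mono_left nhdsWithin_le_nhds
    · filter_upwards [self_mem_nhdsWithin] with θ hθ using (hchiD θ).mp hθ
  have hwF : ∀ᶠ θ in l, w θ = Complex.cos ((a:ℂ) * Afun (chiMap θ2p θ2m θ)) := by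
    filter_upwards [hmaps.eventually (T_eq_F a T hTdiff hTval)] with θ hθ
    rw [hw]
    exact hθ
  have hO1 := (F_expansion a).comp_tendsto hmaps
  simp only [Function.comp_def] at hO1
  set R : ℂ → ℂ := fun θ => csqrt ((θ2p:ℂ) - θ) with hRdef
  have hcsq : ∀ θ : ℂ, csqrt (1 + chiMap θ2p θ2m θ) = ((Real.sqrt (2/Δ) : ℝ):ℂ) * R θ := by
    intro θ
    rw [hchi1, csqrt_real_mul (by positivity : (0:ℝ) < 2/Δ)]
  set K : ℂ := (a:ℂ) * Complex.sin ((a:ℂ)*(Real.pi:ℂ)) * ((Real.sqrt 2 : ℝ):ℂ)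
      * ((Real.sqrt (2/Δ):ℝ):ℂ) with hK
  have hwpc : wθ2p = Complex.cos ((a:ℂ)*(Real.pi:ℂ)) := by
    rw [hwθ2p, ← Complex.ofReal_mul, Complex.ofReal_cos]
  have hrhsO : (fun θ : ℂ => 1 + chiMap θ2p θ2m θ) =O[l] (fun θ => θ - (θ2p:ℂ)) := by
    have h1 : (fun θ : ℂ => ((2/Δ : ℝ) : ℂ) * ((θ2p:ℂ) - θ)) =O[l] (fun θ => (θ2p:ℂ) - θ) :=
      (isBigO_refl _ l).const_mul_left _
    have h2 : (fun θ : ℂ => (θ2p:ℂ) - θ) =O[l] (fun θ => θ - (θ2p:ℂ)) := by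
      apply isBigO_of_le
      intro θ
      rw [norm_sub_rev]
    exact ((h1.congr (fun θ => (hchi1 θ).symm) (fun θ => rfl)).trans h2)
  have hEO : (fun θ => w θ - wθ2p - K * R θ) =O[l] (fun θ => θ - (θ2p:ℂ)) := by
    have heq : (fun θ : ℂ => Complex.cos ((a:ℂ) * Afun (chiMap θ2p θ2m θ))
        - Complex.cos ((a:ℂ) * (Real.pi:ℂ))
        - (a:ℂ) * Complex.sin ((a:ℂ) * (Real.pi:ℂ)) * (Real.sqrt 2 : ℂ)
          * csqrt (1 + chiMap θ2p θ2m θ)) =ᶠ[l]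
        (fun θ => w θ - wθ2p - K * R θ) := by
      filter_upwards [hwF] with θ hθ
      rw [← hθ, hcsq θ, hwpc, hK]
      ring
    exact (hO1.congr' heq EventuallyEq.rfl).trans hrhsO
  -- basic filter facts
  have hev_ne : ∀ᶠ θ in l, ((θ2p:ℂ) - θ) ≠ 0 := by
    filter_upwards [self_mem_nhdsWithin] with θ hθ
    exact Complex.slitPlane_ne_zero ((hDslit θ).mp hθ)
  have hRR : ∀ᶠ θ in l, R θ * R θ = (θ2p:ℂ) - θ := by
    filter_upwards [hev_ne] with θ hθ
    have := sq_csqrt hθ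
    rw [sq] at this
    exact this
  have hsub0 : Filter.Tendsto (fun θ : ℂ => (θ2p:ℂ) - θ) l (nhds 0) := by
    have h : Filter.Tendsto (fun θ : ℂ => (θ2p:ℂ) - θ) (nhds ((θ2p:ℂ)))
        (nhds ((θ2p:ℂ) - (θ2p:ℂ))) := tendsto_const_nhds.sub tendsto_id
    rw [sub_self] at h
    exact h.mono_left nhdsWithin_le_nhds
  have hR0 : Filter.Tendsto R l (nhds 0) := tendsto_csqrt_zero.comp hsub0
  have hsub_R : (fun θ : ℂ => θ - (θ2p:ℂ)) =O[l] R := by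
    have h1 : (fun θ => R θ * R θ) =O[l] (fun θ => R θ * 1) :=
      (isBigO_refl R l).mul (hR0.isBigO_one ℂ)
    have h2 := h1.congr' hRR (show (fun θ => R θ * 1) =ᶠ[l] R by filter_upwards with θ; ring)
    have h3 : (fun θ : ℂ => θ - (θ2p:ℂ)) =O[l] (fun θ => (θ2p:ℂ) - θ) := by
      apply isBigO_of_le
      intro θ
      rw [norm_sub_rev]
    exact h3.trans h2
  have hE_R : (fun θ => w θ - wθ2p - K * R θ) =O[l] R := hEO.trans hsub_R
  have hEto0 : Filter.Tendsto (fun θ => w θ - wθ2p - K * R θ) l (nhds 0) :=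
    hEO.trans_tendsto (by simpa using hsub0.neg.congr (fun θ => by ring))
  have hGW : Filter.Tendsto (fun θ => w θ - w 0) l (nhds (wθ2p - w 0)) := by
    have h : Filter.Tendsto (fun θ => (w θ - wθ2p - K * R θ) + K * R θ + (wθ2p - w 0)) l
        (nhds (0 + K * 0 + (wθ2p - w 0))) :=
      (hEto0.add (tendsto_const_nhds.mul hR0)).add tendsto_const_nhds
    have h2 : (0 : ℂ) + K * 0 + (wθ2p - w 0) = wθ2p - w 0 := by ring
    rw [h2] at h
    exact h.congr (fun θ => by ring)
  have hWne : wθ2p - w 0 ≠ 0 := sub_ne_zero.mpr hne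
  have hGne : ∀ᶠ θ in l, w θ - w 0 ≠ 0 := hGW.eventually_ne hWne
  have hGinvO : (fun θ => (w θ - w 0)⁻¹) =O[l] (fun _ => (1:ℂ)) :=
    ((hGW.inv₀ hWne).isBigO_one ℂ)
  have hGsub : (fun θ => (w θ - w 0) - (wθ2p - w 0)) =O[l] R := by
    have h := hE_R.add ((isBigO_refl R l).const_mul_left K)
    exact h.congr (fun θ => by ring) (fun θ => rfl)
  -- C1 in terms of K
  have hsqrt2K : (Real.sqrt 2) * (Real.sqrt (2/Δ)) = 2 / Real.sqrt Δ := by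
    rw [← Real.sqrt_mul (by norm_num : (0:ℝ) ≤ 2), show (2 : ℝ) * (2/Δ) = 4/Δ by ring,
      Real.sqrt_div (by norm_num : (0:ℝ) ≤ 4),
      show (4:ℝ) = 2^2 by norm_num, Real.sqrt_sq (by norm_num : (0:ℝ) ≤ 2)]
  have hsd : ((Real.sqrt Δ : ℝ):ℂ) ≠ 0 := by
    exact_mod_cast (Real.sqrt_ne_zero'.mpr hΔ)
  have hKval : K = 2 * (a:ℂ) * ((Real.sin (a*Real.pi) : ℝ):ℂ) / ((Real.sqrt Δ : ℝ):ℂ) := by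
    have hreal : Real.sqrt 2 * Real.sqrt (2/Δ) * Real.sqrt Δ = 2 := by
      rw [hsqrt2K]
      field_simp
    rw [hK, show ((a:ℂ)*(Real.pi:ℂ)) = ((a*Real.pi : ℝ):ℂ) by push_cast; ring,
      ← Complex.ofReal_sin, eq_div_iff hsd]
    rw [show (a:ℂ) * ((Real.sin (a*Real.pi):ℝ):ℂ) * ((Real.sqrt 2 : ℝ):ℂ)
        * ((Real.sqrt (2/Δ):ℝ):ℂ) * ((Real.sqrt Δ:ℝ):ℂ)
        = (a:ℂ) * ((Real.sin (a*Real.pi):ℝ):ℂ)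
          * (((Real.sqrt 2 * Real.sqrt (2/Δ) * Real.sqrt Δ : ℝ)):ℂ) by push_cast; ring, hreal]
    push_cast
    ring
  have hC1K : C1 = -φ1p * K / (wθ2p - w 0) := by
    rw [hC1, hKval]
    field_simp
  -- final pointwise identity
  have hfin : (fun θ : ℂ => φ1 θ - φ1p - C1 * (((θ2p : ℂ) - θ) ^ ((1 : ℂ) / 2))) =ᶠ[l]
      (fun θ : ℂ => (-(μ1:ℂ) * w'0) * ((θ - (θ2p:ℂ)) * (w θ - w 0)⁻¹)
      - (-(μ1:ℂ) * w'0 * (θ2p:ℂ) / (wθ2p - w 0))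
          * ((w θ - wθ2p - K * R θ) * (w θ - w 0)⁻¹)
      + (-(μ1:ℂ) * w'0 * (θ2p:ℂ) * K / (wθ2p - w 0)^2)
          * (R θ * ((w θ - w 0) - (wθ2p - w 0)) * (w θ - w 0)⁻¹)) := by
    filter_upwards [hGne] with θ hGθ
    show _ = _
    have hRθ : (((θ2p : ℂ) - θ) ^ ((1 : ℂ) / 2)) = R θ := rfl
    rw [hRθ, hC1K, hφ1p, hφ1]
    simp only []
    field_simp
    ring
  -- big-O of the three pieces
  have hbase1 : (fun θ : ℂ => (θ - (θ2p:ℂ)) * (w θ - w 0)⁻¹) =O[l] (fun θ => θ - (θ2p:ℂ)) := by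
    have h := (isBigO_refl (fun θ : ℂ => θ - (θ2p:ℂ)) l).mul hGinvO
    exact h.congr (fun θ => rfl) (fun θ => mul_one _)
  have t1 : (fun θ : ℂ => (-(μ1:ℂ) * w'0) * ((θ - (θ2p:ℂ)) * (w θ - w 0)⁻¹))
      =O[l] (fun θ => θ - (θ2p:ℂ)) := hbase1.const_mul_left _
  have hbase2 : (fun θ : ℂ => (w θ - wθ2p - K * R θ) * (w θ - w 0)⁻¹)
      =O[l] (fun θ => θ - (θ2p:ℂ)) := by
    have h := hEO.mul hGinvO
    exact h.congr (fun θ => rfl) (fun θ => mul_one _)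
  have t2 : (fun θ : ℂ => (-(μ1:ℂ) * w'0 * (θ2p:ℂ) / (wθ2p - w 0))
      * ((w θ - wθ2p - K * R θ) * (w θ - w 0)⁻¹)) =O[l] (fun θ => θ - (θ2p:ℂ)) :=
    hbase2.const_mul_left _
  have hbase3 : (fun θ : ℂ => R θ * ((w θ - w 0) - (wθ2p - w 0)) * (w θ - w 0)⁻¹)
      =O[l] (fun θ => θ - (θ2p:ℂ)) := by
    have h := ((isBigO_refl R l).mul hGsub).mul hGinvO
    have h2 := h.congr
      (fun θ : ℂ => rfl) (fun θ : ℂ => by show R θ * R θ * 1 = R θ * R θ; ring)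
    have h3 := h2.congr' EventuallyEq.rfl hRR
    have h4 : (fun θ : ℂ => (θ2p:ℂ) - θ) =O[l] (fun θ => θ - (θ2p:ℂ)) := by
      apply isBigO_of_le
      intro θ
      rw [norm_sub_rev]
    exact h3.trans h4
  have t3 : (fun θ : ℂ => (-(μ1:ℂ) * w'0 * (θ2p:ℂ) * K / (wθ2p - w 0)^2)
      * (R θ * ((w θ - w 0) - (wθ2p - w 0)) * (w θ - w 0)⁻¹))
      =O[l] (fun θ => θ - (θ2p:ℂ)) := hbase3.const_mul_left _
  exact ((t1.sub t2).add t3).congr' hfin.symm EventuallyEq.rfl
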